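/- For every integer s ≥ 2 and every n ≥ 0, the cardinality |T_n| is given by the closed formula |T_n| = (s^n / (2·√(1 − 1/s))) · [ (1 + √(1 − 1/s))^{n+1} − (1 − √(1 − 1/s))^{n+1} ], as an identity of real numbers. -/
import Mathlib


open Finset

/-- `T_n`: the set of strings `t : Fin n → ℤ` with all letters in
`Σ_* = {m : 1 ≤ |m| ≤ s}` such that no letter `t_j > 0` is immediately followed by
`t_{j+1} = −t_j`. -/
noncomputable def Tset (s n : ℕ) : Finset (Fin n → ℤ) :=
  letI := Classical.decPred
    (fun t : Fin n → ℤ => (∀ i, t i ≠ 0) ∧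
      ∀ (i : Fin n) (h : (i : ℕ) + 1 < n), ¬(0 < t i ∧ t ⟨(i : ℕ) + 1, h⟩ = -t i))
  (Fintype.piFinset fun _ : Fin n => Finset.Icc (-(s : ℤ)) (s : ℤ)).filter
    (fun t => (∀ i, t i ≠ 0) ∧
      ∀ (i : Fin n) (h : (i : ℕ) + 1 < n), ¬(0 < t i ∧ t ⟨(i : ℕ) + 1, h⟩ = -t i))

lemma mem_Tset {s n : ℕ} {t : Fin n → ℤ} :
    t ∈ Tset s n ↔ (∀ i, t i ∈ Finset.Icc (-(s:ℤ)) (s:ℤ)) ∧ (∀ i, t i ≠ 0) ∧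
      ∀ (i : Fin n) (h : (i : ℕ) + 1 < n), ¬(0 < t i ∧ t ⟨(i:ℕ)+1, h⟩ = -t i) := by
  classical
  simp [Tset, Fintype.mem_piFinset, and_assoc]

lemma cons_mem_Tset {s n : ℕ} {x : ℤ} {u : Fin n → ℤ} :
    Fin.cons x u ∈ Tset s (n+1) ↔
      u ∈ Tset s n ∧ x ∈ Finset.Icc (-(s:ℤ)) (s:ℤ) ∧ x ≠ 0 ∧
        ∀ h : 0 < n, ¬(0 < x ∧ u ⟨0, h⟩ = -x) := by
  rw [mem_Tset, mem_Tset]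
  constructor
  · rintro ⟨h1, h2, h3⟩
    refine ⟨⟨fun i => h1 i.succ, fun i => h2 i.succ, fun i hi => ?_⟩, h1 0, h2 0, fun hn => ?_⟩
    · exact h3 i.succ (Nat.succ_lt_succ hi)
    · exact h3 0 (Nat.succ_lt_succ hn)
  · rintro ⟨⟨h1, h2, h3⟩, hx1, hx2, hx3⟩
    refine ⟨fun i => Fin.cases hx1 h1 i, fun i => Fin.cases hx2 h2 i, fun i hi => ?_⟩
    refine Fin.cases ?_ ?_ i hi
    · intro h
      exact hx3 (by omega : 0 < n)
    · intro j h
      exact h3 j (by exact Nat.lt_of_succ_lt_succ h)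

noncomputable def Aset (s n : ℕ) (u : Fin n → ℤ) : Finset ℤ :=
  letI := Classical.decPred (fun x : ℤ => x ≠ 0 ∧ ∀ h : 0 < n, ¬(0 < x ∧ u ⟨0, h⟩ = -x))
  (Finset.Icc (-(s:ℤ)) (s:ℤ)).filter
    (fun x => x ≠ 0 ∧ ∀ h : 0 < n, ¬(0 < x ∧ u ⟨0, h⟩ = -x))

lemma mem_Aset {s n : ℕ} {u : Fin n → ℤ} {x : ℤ} :
    x ∈ Aset s n u ↔ x ∈ Finset.Icc (-(s:ℤ)) (s:ℤ) ∧ x ≠ 0 ∧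
      ∀ h : 0 < n, ¬(0 < x ∧ u ⟨0, h⟩ = -x) := by
  classical
  simp [Aset, and_assoc]

lemma card_Tset_succ (s n : ℕ) :
    (Tset s (n+1)).card = ∑ u ∈ Tset s n, (Aset s n u).card := by
  classical
  rw [← Finset.card_sigma]
  apply Finset.card_nbij' (i := fun t => ⟨Fin.tail t, t 0⟩)
    (j := fun p => Fin.cons p.2 p.1)
  · intro t ht
    have ht' : Fin.cons (t 0) (Fin.tail t) ∈ Tset s (n+1) := by
      rwa [Fin.cons_self_tail]
    rw [cons_mem_Tset] at ht'
    simp only [Finset.mem_coe, Finset.mem_sigma]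
    exact ⟨ht'.1, mem_Aset.mpr ⟨ht'.2.1, ht'.2.2.1, ht'.2.2.2⟩⟩
  · intro p hp
    simp only [Finset.mem_coe, Finset.mem_sigma] at hp
    have := mem_Aset.mp hp.2
    exact Finset.mem_coe.mpr (cons_mem_Tset.mpr ⟨hp.1, this.1, this.2.1, this.2.2⟩)
  · intro t ht
    simp [Fin.cons_self_tail]
  · intro p hp
    simp [Fin.tail_cons]

lemma card_Aset_neg (s n : ℕ) (u : Fin n → ℤ) :
    ((Aset s n u).filter (fun x => x < 0)).card = s := by
  classical
  have : (Aset s n u).filter (fun x => x < 0) = Finset.Icc (-(s:ℤ)) (-1) := by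
    ext x
    simp only [Finset.mem_filter, mem_Aset, Finset.mem_Icc]
    constructor
    · rintro ⟨⟨h1, h2, h3⟩, h4⟩; omega
    · intro h
      refine ⟨⟨⟨h.1, by omega⟩, by omega, fun hn hc => by omega⟩, by omega⟩
  rw [this, Int.card_Icc]
  simp

lemma card_Tset_neg (s n : ℕ) :
    ((Tset s (n+1)).filter (fun t => t 0 < 0)).card = s * (Tset s n).card := by
  classical
  have : ((Tset s (n+1)).filter (fun t => t 0 < 0)).card
      = ((Tset s n).sigma (fun u => (Aset s n u).filter (fun x => x < 0))).card := by
    apply Finset.card_nbij' (i := fun t => ⟨Fin.tail t, t 0⟩)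
      (j := fun p => Fin.cons p.2 p.1)
    · intro t ht
      simp only [Finset.mem_coe, Finset.mem_filter] at ht
      obtain ⟨ht, ht0⟩ := ht
      have ht' : Fin.cons (t 0) (Fin.tail t) ∈ Tset s (n+1) := by
        rwa [Fin.cons_self_tail]
      rw [cons_mem_Tset] at ht'
      simp only [Finset.mem_coe, Finset.mem_sigma, Finset.mem_filter]
      exact ⟨ht'.1, mem_Aset.mpr ⟨ht'.2.1, ht'.2.2.1, ht'.2.2.2⟩, ht0⟩
    · intro p hp
      simp only [Finset.mem_coe, Finset.mem_sigma, Finset.mem_filter] at hp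
      have := mem_Aset.mp hp.2.1
      refine Finset.mem_coe.mpr (Finset.mem_filter.mpr ⟨cons_mem_Tset.mpr ⟨hp.1, this.1, this.2.1, this.2.2⟩, ?_⟩)
      simpa using hp.2.2
    · intro t ht
      simp [Fin.cons_self_tail]
    · intro p hp
      simp [Fin.tail_cons]
  rw [this, Finset.card_sigma]
  simp [card_Aset_neg, mul_comm]

lemma card_Aset (s n : ℕ) {u : Fin n → ℤ} (hu : u ∈ Tset s n) (hs : 1 ≤ s) :
    (Aset s n u).card + (if (∀ h : 0 < n, ¬ u ⟨0, h⟩ < 0) then 0 else 1) = 2 * s := by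
  classical
  have hIcc : (Finset.Icc (-(s:ℤ)) (s:ℤ)).card = 2*s+1 := by
    rw [Int.card_Icc]; omega
  by_cases hcase : ∀ h : 0 < n, ¬ u ⟨0, h⟩ < 0
  · rw [if_pos hcase]
    have : Aset s n u = (Finset.Icc (-(s:ℤ)) (s:ℤ)).erase 0 := by
      ext x
      simp only [mem_Aset, Finset.mem_erase, Finset.mem_Icc]
      constructor
      · rintro ⟨h1, h2, h3⟩; exact ⟨h2, h1⟩
      · rintro ⟨h2, h1⟩
        refine ⟨h1, h2, fun hn hc => ?_⟩
        exact hcase hn (by omega)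
    rw [this, Finset.card_erase_of_mem (by simp only [Finset.mem_Icc]; omega), hIcc]
    omega
  · rw [if_neg hcase]
    push_neg at hcase
    obtain ⟨hn, hu0⟩ := hcase
    have hmem := mem_Tset.mp hu
    have hbd := Finset.mem_Icc.mp (hmem.1 ⟨0, hn⟩)
    have : Aset s n u = ((Finset.Icc (-(s:ℤ)) (s:ℤ)).erase 0).erase (-(u ⟨0, hn⟩)) := by
      ext x
      simp only [mem_Aset, Finset.mem_erase, Finset.mem_Icc]
      constructor
      · rintro ⟨h1, h2, h3⟩
        refine ⟨fun hx => h3 hn ⟨by omega, by omega⟩, h2, h1⟩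
      · rintro ⟨h3, h2, h1⟩
        refine ⟨h1, h2, fun hn' hc => ?_⟩
        exact h3 (by omega)
    rw [this, Finset.card_erase_of_mem, Finset.card_erase_of_mem (by simp only [Finset.mem_Icc]; omega), hIcc]
    · omega
    · simp only [Finset.mem_erase, Finset.mem_Icc]
      exact ⟨by omega, by omega, by omega⟩

lemma card_Tset_zero (s : ℕ) : (Tset s 0).card = 1 := by
  rw [Finset.card_eq_one]
  refine ⟨fun i => i.elim0, ?_⟩
  ext t
  simp only [Finset.mem_singleton]
  constructor
  · intro _; funext i; exact i.elim0
  · rintro rfl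
    exact mem_Tset.mpr ⟨fun i => i.elim0, fun i => i.elim0, fun i => i.elim0⟩

lemma card_Tset_one (s : ℕ) (hs : 1 ≤ s) : (Tset s 1).card = 2 * s := by
  rw [card_Tset_succ]
  rw [Finset.sum_congr rfl (fun u hu => by
      have := card_Aset s 0 hu hs
      simpa using this : ∀ u ∈ Tset s 0, (Aset s 0 u).card = 2*s)]
  rw [Finset.sum_const, card_Tset_zero, smul_eq_mul, one_mul]

lemma rec_nat (s : ℕ) (hs : 1 ≤ s) (n : ℕ) :
    (Tset s (n+2)).card + s * (Tset s n).card = 2 * s * (Tset s (n+1)).card := by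
  classical
  have key : ∀ u ∈ Tset s (n+1),
      (Aset s (n+1) u).card + (if u 0 < 0 then 1 else 0) = 2*s := by
    intro u hu
    have h2 := card_Aset s (n+1) hu hs
    by_cases hc : u 0 < 0
    · rw [if_pos hc]
      rw [if_neg] at h2
      · omega
      · push_neg
        exact ⟨Nat.succ_pos n, by rw [Fin.mk_zero]; exact hc⟩
    · rw [if_neg hc]
      rw [if_pos] at h2
      · omega
      · intro h; rw [Fin.mk_zero]; exact hc
  rw [card_Tset_succ s (n+1)]
  calc (∑ u ∈ Tset s (n+1), (Aset s (n+1) u).card) + s * (Tset s n).card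
      = ∑ u ∈ Tset s (n+1), ((Aset s (n+1) u).card + if u 0 < 0 then 1 else 0) := by
        rw [Finset.sum_add_distrib, ← Finset.card_filter, card_Tset_neg]
    _ = ∑ _u ∈ Tset s (n+1), 2*s := Finset.sum_congr rfl key
    _ = 2*s*(Tset s (n+1)).card := by rw [Finset.sum_const, smul_eq_mul, mul_comm]

theorem stmt_9 (s : ℕ) (hs : 2 ≤ s) (n : ℕ) :
    ((Tset s n).card : ℝ)
      = (s : ℝ) ^ n / (2 * Real.sqrt (1 - 1 / (s : ℝ)))
        * ((1 + Real.sqrt (1 - 1 / (s : ℝ))) ^ (n + 1)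
            - (1 - Real.sqrt (1 - 1 / (s : ℝ))) ^ (n + 1)) := by
  set r := Real.sqrt (1 - 1/(s:ℝ)) with hrdef
  have hs2 : (2:ℝ) ≤ (s:ℝ) := by exact_mod_cast hs
  have hspos : (0:ℝ) < s := by linarith
  have hpos : (0:ℝ) < 1 - 1/(s:ℝ) := by
    rw [sub_pos, div_lt_one hspos]; linarith
  have hr2 : r^2 = 1 - 1/(s:ℝ) := Real.sq_sqrt hpos.le
  have hrpos : 0 < r := Real.sqrt_pos.mpr hpos
  have hs0 : (s:ℝ) ≠ 0 := ne_of_gt hspos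
  set F : ℕ → ℝ := fun m => (s:ℝ)^m/(2*r) * ((1+r)^(m+1) - (1-r)^(m+1)) with hF
  have hr2' : r^2 * s = (s:ℝ) - 1 := by
    field_simp at hr2
    linarith
  have e : (s:ℝ) * (1+r)^2 = 2*s*(1+r) - 1 := by linear_combination hr2'
  have e' : (s:ℝ) * (1-r)^2 = 2*s*(1-r) - 1 := by linear_combination hr2'
  have key : ∀ m, F (m+2) = 2*s*F (m+1) - s * F m := by
    intro m
    have k1 : (s:ℝ)^2*(1+r)^(m+3) = 2*s^2*(1+r)^(m+2) - s*(1+r)^(m+1) := by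
      linear_combination ((s:ℝ)*(1+r)^(m+1)) * e
    have k2 : (s:ℝ)^2*(1-r)^(m+3) = 2*s^2*(1-r)^(m+2) - s*(1-r)^(m+1) := by
      linear_combination ((s:ℝ)*(1-r)^(m+1)) * e'
    simp only [hF]
    linear_combination ((s:ℝ)^m/(2*r)) * k1 - ((s:ℝ)^m/(2*r)) * k2
  have base0 : ((Tset s 0).card : ℝ) = F 0 := by
    rw [card_Tset_zero]
    simp only [hF]
    field_simp
    ring
  have base1 : ((Tset s 1).card : ℝ) = F 1 := by
    rw [card_Tset_one s (by omega)]
    push_cast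
    simp only [hF]
    field_simp
    ring
  have main : ∀ m, ((Tset s m).card : ℝ) = F m ∧ ((Tset s (m+1)).card : ℝ) = F (m+1) := by
    intro m
    induction m with
    | zero => exact ⟨base0, base1⟩
    | succ k ih =>
      refine ⟨ih.2, ?_⟩
      have hrec := rec_nat s (by omega) k
      have hcast : ((Tset s (k+2)).card : ℝ) + s * ((Tset s k).card : ℝ)
          = 2*s*((Tset s (k+1)).card : ℝ) := by exact_mod_cast hrec
      rw [key k, ← ih.1, ← ih.2]
      linarith
  have h := (main n).1
  simp only [hF] at h
  exact h
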